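/- Let H be a monoid such that the reduced quotient H_red = H/H^× is finitely generated, and let r = inf R̄(H). Then r is the only possible limit point of the set {ρ(a) : a ∈ H, 1 ≤ ρ(a) < r}; equivalently, for every ε > 0 the set {ρ(a) : a ∈ H and ρ(a) ≤ r − ε} is finite. -/

import Mathlib

open Filter Topology

/-- The set of factorization lengths of `a`: the set of all `k` such that `a` is a
product of `k` atoms (irreducibles); by convention it is `{0}` for units. -/
noncomputable def lengthSet (H : Type*) [CommMonoid H] (a : H) : Set ℕ :=
  open Classical in
  if IsUnit a then {0}
  else {k | ∃ f : Fin k → H, (∀ i, Irreducible (f i)) ∧ a = ∏ i, f i}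

/-- The elasticity `ρ(a) = max L(a) / min L(a)` of an element of a BF-monoid,
with `ρ(a) = 1` for units. -/
noncomputable def elasticity (H : Type*) [CommMonoid H] (a : H) : ℝ :=
  open Classical in
  if IsUnit a then 1
  else ((sSup (lengthSet H a) : ℕ) : ℝ) / ((sInf (lengthSet H a) : ℕ) : ℝ)

/-- The elasticity `ρ(H) = sup {ρ(a) : a ∈ H} ∈ ℝ≥1 ∪ {∞}` of the monoid `H`. -/
noncomputable def monoidElasticity (H : Type*) [CommMonoid H] : EReal :=
  ⨆ a : H, ((elasticity H a : ℝ) : EReal)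

/-- The set `R̄(H)` of asymptotic elasticities `ρ̄(a) = lim_{n → ∞} ρ(aⁿ)`
of nonunits `a ∈ H` (membership requires the limit to exist). -/
def asympSet (H : Type*) [CommMonoid H] : Set EReal :=
  {r | ∃ a : H, ¬ IsUnit a ∧
    Tendsto (fun n : ℕ => ((elasticity H (a ^ n) : ℝ) : EReal)) atTop (nhds r)}

/-- `H` is locally finitely generated: for every `a ∈ H` there are only finitely many
atoms, up to associates, dividing some power of `a`. -/
def LocallyFinitelyGenerated (H : Type*) [CommMonoid H] : Prop :=
  ∀ a : H, {u : Associates H | Irreducible u ∧ ∃ n : ℕ, u ∣ Associates.mk (a ^ n)}.Finite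

/-- `H` is a BF-monoid: atomic (every nonunit has a factorization into atoms) and
all sets of lengths are finite. -/
def IsBFMonoid (H : Type*) [CommMonoid H] : Prop :=
  (∀ a : H, ¬ IsUnit a → (lengthSet H a).Nonempty) ∧ ∀ a : H, (lengthSet H a).Finite

/-- `(k, ℓ) ≠ (0,0)` is a nice pair with respect to `(a, b)` if
`max L((aᵏbˡ)ᵗ) = t · max L(aᵏbˡ)` and `min L((aᵏbˡ)ᵗ) = t · min L(aᵏbˡ)` for all `t ∈ ℕ`. -/
def IsNicePair (H : Type*) [CommMonoid H] (a b : H) (k ℓ : ℕ) : Prop :=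
  ¬ (k = 0 ∧ ℓ = 0) ∧ ∀ t : ℕ, 0 < t →
    sSup (lengthSet H ((a ^ k * b ^ ℓ) ^ t)) = t * sSup (lengthSet H (a ^ k * b ^ ℓ)) ∧
    sInf (lengthSet H ((a ^ k * b ^ ℓ) ^ t)) = t * sInf (lengthSet H (a ^ k * b ^ ℓ))

/-- `H` is strongly primary: `H ≠ H^×` and for every nonunit `a` there is `n ∈ ℕ`
such that every product of `n` nonunits of `H` is divisible by `a`. -/
def StronglyPrimary (H : Type*) [CommMonoid H] : Prop :=
  (∃ a : H, ¬ IsUnit a) ∧ ∀ a : H, ¬ IsUnit a → ∃ n : ℕ, 0 < n ∧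
    ∀ f : Fin n → H, (∀ i, ¬ IsUnit (f i)) → a ∣ ∏ i, f i

/-- `H` is half-factorial: atomic and `|L(a)| = 1` for every `a ∈ H`. -/
def IsHalfFactorial (H : Type*) [CommMonoid H] : Prop :=
  ∀ a : H, ∃ k : ℕ, lengthSet H a = {k}


namespace St3Aux


lemma nat_mono_subseq (f : ℕ → ℕ) : ∃ g : ℕ → ℕ, StrictMono g ∧ Monotone (f ∘ g) := by
  have h : (Set.univ : Set ℕ).IsPWO := (Set.isWF_univ_iff.mpr ⟨wellFounded_lt⟩).isPWO
  obtain ⟨g, hg⟩ := h.exists_monotone_subseq (f := f) (fun n => Set.mem_univ _)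
  exact ⟨g, g.strictMono, hg⟩

lemma pi_mono_subseq {ι : Type*} [Fintype ι] (f : ℕ → ι → ℕ) :
    ∃ g : ℕ → ℕ, StrictMono g ∧ ∀ i, Monotone fun n => f (g n) i := by
  suffices h : ∀ T : Finset ι, ∃ g : ℕ → ℕ, StrictMono g ∧
      ∀ i ∈ T, Monotone fun n => f (g n) i by
    obtain ⟨g, hg1, hg2⟩ := h Finset.univ
    exact ⟨g, hg1, fun i => hg2 i (Finset.mem_univ i)⟩
  intro T
  classical
  induction T using Finset.induction_on with
  | empty => exact ⟨id, strictMono_id, by simp⟩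
  | @insert i T' hi ih =>
      obtain ⟨g, hg1, hg2⟩ := ih
      obtain ⟨g', hg'1, hg'2⟩ := nat_mono_subseq (fun n => f (g n) i)
      refine ⟨g ∘ g', hg1.comp hg'1, ?_⟩
      intro j hj
      rcases Finset.mem_insert.mp hj with rfl | hj
      · exact hg'2
      · exact fun m n hmn => hg2 j hj (hg'1.monotone hmn)

lemma antichain_finite {ι : Type*} [Fintype ι] (s : Set (ι → ℕ))
    (hs : ∀ x ∈ s, ∀ y ∈ s, x ≤ y → x = y) : s.Finite := by
  by_contra hinf
  have hinf' : s.Infinite := hinf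
  let e := hinf'.natEmbedding
  obtain ⟨g, hg1, hg2⟩ := pi_mono_subseq (fun n => (e n : ι → ℕ))
  have hle : (e (g 0) : ι → ℕ) ≤ (e (g 1) : ι → ℕ) :=
    fun i => hg2 i (by norm_num)
  have heq : e (g 0) = e (g 1) :=
    Subtype.ext (hs _ (e (g 0)).2 _ (e (g 1)).2 hle)
  exact absurd (e.injective heq) (hg1 (by norm_num : (0:ℕ) < 1)).ne

lemma mono_stab (f : ℕ → ℕ) (hf : Monotone f) (hb : BddAbove (Set.range f)) :
    ∃ N, ∀ n, N ≤ n → f n = f N := by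
  have hne : (Set.range f).Nonempty := ⟨f 0, ⟨0, rfl⟩⟩
  obtain ⟨N, hN⟩ := Nat.sSup_mem hne hb
  exact ⟨N, fun n hn => le_antisymm (hN ▸ le_csSup hb ⟨n, rfl⟩) (hf hn)⟩

lemma pi_stab {ι : Type*} [Fintype ι] (f : ℕ → ι → ℕ)
    (hf : ∀ i, Monotone fun n => f n i) :
    ∃ N, ∀ i, (∀ n, N ≤ n → f n i = f N i) ∨ (∀ B, ∃ M, ∀ n, M ≤ n → B ≤ f n i) := by
  classical
  have hchoice : ∀ i : ι, ∃ N : ℕ, (∀ n, N ≤ n → f n i = f N i) ∨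
      (∀ B, ∃ M, ∀ n, M ≤ n → B ≤ f n i) := by
    intro i
    by_cases hb : BddAbove (Set.range fun n => f n i)
    · obtain ⟨N, hN⟩ := mono_stab _ (hf i) hb
      exact ⟨N, Or.inl hN⟩
    · refine ⟨0, Or.inr fun B => ?_⟩
      obtain ⟨y, ⟨M, rfl⟩, hy⟩ := not_bddAbove_iff.mp hb B
      exact ⟨M, fun n hn => le_trans hy.le (hf i hn)⟩
  choose N hN using hchoice
  refine ⟨Finset.univ.sup N, fun i => ?_⟩
  rcases hN i with h | h
  · left
    intro n hn
    have hNi : N i ≤ Finset.univ.sup N := Finset.le_sup (Finset.mem_univ i)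
    rw [h n (le_trans hNi hn), h _ hNi]
  · exact Or.inr h


variable {H : Type*} [CancelCommMonoid H]




lemma assoc_cancel {a b c : Associates H} (h : a * b = a * c) : b = c := by
  obtain ⟨a, rfl⟩ := Associates.mk_surjective a
  obtain ⟨b, rfl⟩ := Associates.mk_surjective b
  obtain ⟨c, rfl⟩ := Associates.mk_surjective c
  rw [Associates.mk_mul_mk, Associates.mk_mul_mk, Associates.mk_eq_mk_iff_associated] at h
  obtain ⟨u, hu⟩ := h
  rw [Associates.mk_eq_mk_iff_associated]
  exact ⟨u, mul_left_cancel (by rw [← mul_assoc]; exact hu)⟩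

lemma irred_mem_gen {S : Finset (Associates H)}
    (hS : Submonoid.closure (S : Set (Associates H)) = ⊤)
    {u : Associates H} (hu : Irreducible u) : u ∈ S := by
  have hmem : u ∈ Submonoid.closure (S : Set (Associates H)) := by rw [hS]; trivial
  obtain ⟨l, hl, hprod⟩ := Submonoid.exists_list_of_mem_closure hmem
  clear hmem hS
  induction l with
  | nil => exact absurd (by rw [← hprod, List.prod_nil]; exact isUnit_one) hu.not_isUnit
  | cons a t ih =>
      rw [List.prod_cons] at hprod
      rcases hu.isUnit_or_isUnit hprod.symm with h | h
      · rw [Associates.isUnit_iff_eq_one] at h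
        subst h
        rw [one_mul] at hprod
        exact ih (fun y hy => hl y (List.mem_cons_of_mem _ hy)) hprod
      · rw [Associates.isUnit_iff_eq_one] at h
        rw [h, mul_one] at hprod
        exact hprod ▸ hl a (List.mem_cons_self (a := a) (l := t))



variable (A : Finset (Associates H))

noncomputable def psi (x : A → ℕ) : Associates H := ∏ u : A, (u : Associates H) ^ x u

def tot (x : A → ℕ) : ℕ := ∑ u : A, x u

lemma psi_add (x y : A → ℕ) : psi A (x + y) = psi A x * psi A y := by
  simp [psi, pow_add, Finset.prod_mul_distrib]

lemma psi_zero : psi A (0 : A → ℕ) = 1 := by simp [psi]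

lemma psi_smul (k : ℕ) (x : A → ℕ) : psi A (fun u => k * x u) = (psi A x) ^ k := by
  simp only [psi, ← Finset.prod_pow]
  refine Finset.prod_congr rfl fun u _ => ?_
  rw [mul_comm, pow_mul]

lemma tot_add (x y : A → ℕ) : tot A (x + y) = tot A x + tot A y := by
  simp [tot, Finset.sum_add_distrib]

lemma tot_smul (k : ℕ) (x : A → ℕ) : tot A (fun u => k * x u) = k * tot A x := by
  simp [tot, Finset.mul_sum]

lemma tot_eq_zero {x : A → ℕ} (h : tot A x = 0) : x = 0 := by
  funext u
  have := Finset.sum_eq_zero_iff.mp h u (Finset.mem_univ u)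
  simpa using this

lemma add_sub_of_le {x y : A → ℕ} (h : x ≤ y) : x + (y - x) = y := by
  funext u
  exact Nat.add_sub_cancel' (h u)

lemma psi_eq_one (hirr : ∀ u : A, Irreducible (u : Associates H))
    {x : A → ℕ} (h : psi A x = 1) : x = 0 := by
  by_contra hx
  have : ∃ u, x u ≠ 0 := by
    by_contra h'
    push_neg at h'
    exact hx (funext fun u => h' u)
  obtain ⟨u, hu⟩ := this
  have hdvd : (u : Associates H) ∣ psi A x := by
    refine dvd_trans (dvd_pow_self _ hu) ?_
    exact Finset.dvd_prod_of_mem _ (Finset.mem_univ u)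
  rw [h] at hdvd
  exact (hirr u).not_isUnit (isUnit_of_dvd_one hdvd)

open Classical in
noncomputable def sing (u : A) : A → ℕ := fun v => if v = u then 1 else 0

lemma psi_sing (u : A) : psi A (sing A u) = u := by
  classical
  simp only [psi, sing]
  have : (∏ x : A, (x : Associates H) ^ (if x = u then 1 else 0))
      = ∏ x : A, (if x = u then (x : Associates H) else 1) :=
    Finset.prod_congr rfl fun v _ => by split <;> simp
  rw [this, Finset.prod_ite_eq' Finset.univ u (fun v => (v : Associates H))]
  simp

lemma tot_sing (u : A) : tot A (sing A u) = 1 := by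
  classical
  simp [tot, sing]


lemma irr_mk {a : H} : Irreducible (Associates.mk a) ↔ Irreducible a := by
  constructor
  · intro h
    refine ⟨fun hu => h.not_isUnit (Associates.isUnit_mk.mpr hu), fun b c hbc => ?_⟩
    have := h.isUnit_or_isUnit (by rw [hbc, Associates.mk_mul_mk])
    rcases this with h' | h'
    · exact Or.inl (Associates.isUnit_mk.mp h')
    · exact Or.inr (Associates.isUnit_mk.mp h')
  · intro h
    refine ⟨fun hu => h.not_isUnit (Associates.isUnit_mk.mp hu), fun y z hyz => ?_⟩
    obtain ⟨b, rfl⟩ := Associates.mk_surjective y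
    obtain ⟨c, rfl⟩ := Associates.mk_surjective z
    rw [Associates.mk_mul_mk, Associates.mk_eq_mk_iff_associated] at hyz
    obtain ⟨u, hu⟩ := hyz
    have hthis : a = b * (c * ↑u⁻¹) := by
      rw [← mul_assoc, ← hu, mul_assoc]
      simp
    rcases h.isUnit_or_isUnit hthis with h' | h'
    · exact Or.inl (Associates.isUnit_mk.mpr h')
    · exact Or.inr (Associates.isUnit_mk.mpr (isUnit_of_mul_isUnit_left h'))

lemma exists_vec_of_factorization (hall : ∀ u : Associates H, Irreducible u → u ∈ A) :
    ∀ (k : ℕ) (f : Fin k → Associates H), (∀ i, Irreducible (f i)) →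
    ∃ x : A → ℕ, psi A x = ∏ i, f i ∧ tot A x = k := by
  intro k
  induction k with
  | zero => exact fun f _ => ⟨0, by simp [psi_zero], by simp [tot]⟩
  | succ n ih =>
      intro f hf
      obtain ⟨x, hx, ht⟩ := ih (fun i => f i.succ) (fun i => hf i.succ)
      refine ⟨sing A ⟨f 0, hall _ (hf 0)⟩ + x, ?_, ?_⟩
      · rw [psi_add, psi_sing, hx, Fin.prod_univ_succ]
      · rw [tot_add, tot_sing, ht, add_comm]

lemma exists_factorization_of_vec (hirr : ∀ u : A, Irreducible (u : Associates H)) :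
    ∀ (k : ℕ) (x : A → ℕ), tot A x = k →
    ∃ f : Fin k → Associates H, (∀ i, Irreducible (f i)) ∧ psi A x = ∏ i, f i := by
  intro k
  induction k with
  | zero =>
      intro x hx
      refine ⟨Fin.elim0, fun i => i.elim0, ?_⟩
      rw [tot_eq_zero A hx, psi_zero]
      simp
  | succ n ih =>
      intro x hx
      have : ∃ u, x u ≠ 0 := by
        by_contra h'
        push_neg at h'
        rw [show x = 0 from funext fun u => h' u] at hx
        simp [tot] at hx
      obtain ⟨u, hu⟩ := this
      have hle : sing A u ≤ x := by
        intro v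
        classical
        simp only [sing]
        split
        · subst ‹v = u›; omega
        · omega
      have hxdec : sing A u + (x - sing A u) = x := add_sub_of_le A hle
      have htot : tot A (x - sing A u) = n := by
        have := tot_add A (sing A u) (x - sing A u)
        rw [hxdec, hx, tot_sing] at this
        omega
      obtain ⟨f, hf, hpsi⟩ := ih _ htot
      refine ⟨Fin.cons (u : Associates H) f, ?_, ?_⟩
      · intro i
        refine Fin.cases ?_ ?_ i
        · exact hirr u
        · exact fun j => hf j
      · rw [← hxdec, psi_add, psi_sing, hpsi, Fin.prod_cons]

lemma lengthSet_eq_fiber (hA : ∀ u : Associates H, Irreducible u ↔ u ∈ A)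
    {a : H} (ha : ¬ IsUnit a) :
    lengthSet H a = {k | ∃ x : A → ℕ, psi A x = Associates.mk a ∧ tot A x = k} := by
  have hirr : ∀ u : A, Irreducible (u : Associates H) := fun u => (hA u).mpr u.2
  ext k
  simp only [lengthSet, if_neg ha, Set.mem_setOf_eq]
  constructor
  · rintro ⟨f, hf, rfl⟩
    obtain ⟨x, hx, ht⟩ := exists_vec_of_factorization A (fun u hu => (hA u).mp hu) k
      (fun i => Associates.mk (f i)) (fun i => by exact irr_mk.mpr (hf i))
    refine ⟨x, ?_, ht⟩
    rw [hx]
    exact (map_prod Associates.mkMonoidHom f Finset.univ).symm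
  · rintro ⟨x, hx, ht⟩
    obtain ⟨F, hF, hpsi⟩ := exists_factorization_of_vec A hirr k x ht
    have hprod : Associates.mk a = ∏ i, F i := by rw [← hpsi, hx]
    rcases Nat.eq_zero_or_pos k with hk | hk
    · subst hk
      simp at hprod
      exact absurd hprod ha
    obtain ⟨k', rfl⟩ := Nat.exists_eq_succ_of_ne_zero hk.ne'
    choose g hg using fun i => Associates.mk_surjective (F i)
    have hgi : ∀ i, Irreducible (g i) :=
      fun i => irr_mk.mp (by rw [hg i]; exact hF i)
    have hassoc : Associated (∏ i, g i) a := by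
      rw [← Associates.mk_eq_mk_iff_associated]
      calc Associates.mk (∏ i, g i) = ∏ i, Associates.mk (g i) :=
            map_prod Associates.mkMonoidHom g Finset.univ
        _ = ∏ i, F i := by simp only [hg]
        _ = Associates.mk a := hprod.symm
    obtain ⟨v, hv⟩ := hassoc
    classical
    refine ⟨Function.update g 0 (g 0 * v), fun i => ?_, ?_⟩
    · rcases eq_or_ne i 0 with rfl | hne
      · rw [Function.update_self]
        exact Associated.irreducible ⟨v, rfl⟩ (hgi 0)
      · rw [Function.update_of_ne hne]
        exact hgi i
    · have h1 : (∏ i, Function.update g 0 ((g 0) * (v : H)) i)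
          = (g 0 * v) * ∏ i ∈ Finset.univ \ {0}, g i := by
        rw [Finset.prod_update_of_mem (Finset.mem_univ 0)]
      have h2 : (∏ i, g i) = g 0 * ∏ i ∈ Finset.univ \ {0}, g i :=
        Finset.prod_eq_mul_prod_sdiff_singleton_of_mem (Finset.mem_univ 0) g
      rw [h1, mul_comm (g 0) (v : H), mul_assoc, ← h2]
      rw [mul_comm (v : H) _, hv]


lemma fiber_eq_of_le (hirr : ∀ u : A, Irreducible (u : Associates H)) {x y : A → ℕ}
    (hxy : x ≤ y) (h : psi A x = psi A y) : x = y := by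
  have hadd : x + (y - x) = y := add_sub_of_le A hxy
  have hmul : psi A x * psi A (y - x) = psi A x * 1 := by
    rw [mul_one, ← psi_add, hadd]
    exact h.symm
  have h0 := psi_eq_one A hirr (assoc_cancel hmul)
  rw [← hadd, h0, add_zero]

lemma lengths_finite (hirr : ∀ u : A, Irreducible (u : Associates H)) (a : Associates H) :
    {k | ∃ x : A → ℕ, psi A x = a ∧ tot A x = k}.Finite := by
  have hfib : {x : A → ℕ | psi A x = a}.Finite :=
    antichain_finite _ (fun x hx y hy hle => fiber_eq_of_le A hirr hle (by
      rw [Set.mem_setOf_eq] at hx hy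
      rw [hx, hy]))
  have heq : {k | ∃ x : A → ℕ, psi A x = a ∧ tot A x = k} = (tot A) '' {x | psi A x = a} := by
    ext k
    simp only [Set.mem_image, Set.mem_setOf_eq]
  rw [heq]
  exact hfib.image _

def IsExt (x y : A → ℕ) : Prop :=
  psi A x = psi A y ∧ (∀ x', psi A x' = psi A x → tot A x ≤ tot A x')
    ∧ (∀ y', psi A y' = psi A x → tot A y' ≤ tot A y)

lemma ext_mono {x y x' y' : A → ℕ} (hE : IsExt A x y) (hU : psi A x' = psi A y')
    (hx : x' ≤ x) (hy : y' ≤ y) : IsExt A x' y' := by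
  have hdx : x' + (x - x') = x := add_sub_of_le A hx
  have hdy : y' + (y - y') = y := add_sub_of_le A hy
  have htx : tot A x' + tot A (x - x') = tot A x := by rw [← tot_add, hdx]
  have hty : tot A y' + tot A (y - y') = tot A y := by rw [← tot_add, hdy]
  refine ⟨hU, fun z hz => ?_, fun w hw => ?_⟩
  · have hpz : psi A ((x - x') + z) = psi A x := by
      rw [psi_add, hz, mul_comm, ← psi_add, hdx]
    have := hE.2.1 _ hpz
    rw [tot_add] at this
    omega
  · have hpw : psi A ((y - y') + w) = psi A x := by
      rw [psi_add, hw, hU, mul_comm, ← psi_add, hdy, ← hE.1]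
    have := hE.2.2 _ hpw
    rw [tot_add] at this
    omega

lemma elasticity_of_ext (hA : ∀ u : Associates H, Irreducible u ↔ u ∈ A)
    {x y : A → ℕ} (hE : IsExt A x y) (hx0 : x ≠ 0) {b : H}
    (hb : Associates.mk b = psi A x) :
    ¬ IsUnit b ∧ elasticity H b = (tot A y : ℝ) / (tot A x : ℝ) := by
  have hirr : ∀ u : A, Irreducible (u : Associates H) := fun u => (hA u).mpr u.2
  have hnu : ¬ IsUnit b := by
    intro hu
    rw [← Associates.mk_eq_one] at hu
    exact hx0 (psi_eq_one A hirr (by rw [← hb, hu]))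
  have hls := lengthSet_eq_fiber A hA hnu
  have hSup : sSup (lengthSet H b) = tot A y := by
    rw [hls]
    have hmem : tot A y ∈ {k | ∃ x' : A → ℕ, psi A x' = Associates.mk b ∧ tot A x' = k} :=
      ⟨y, by rw [hb, hE.1], rfl⟩
    have hub : ∀ k ∈ {k | ∃ x' : A → ℕ, psi A x' = Associates.mk b ∧ tot A x' = k},
        k ≤ tot A y := by
      rintro k ⟨y', hy', rfl⟩
      exact hE.2.2 y' (by rw [hy', hb])
    exact le_antisymm (csSup_le ⟨_, hmem⟩ hub) (le_csSup ⟨_, hub⟩ hmem)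
  have hInf : sInf (lengthSet H b) = tot A x := by
    rw [hls]
    have hmem : tot A x ∈ {k | ∃ x' : A → ℕ, psi A x' = Associates.mk b ∧ tot A x' = k} :=
      ⟨x, hb.symm, rfl⟩
    refine le_antisymm (Nat.sInf_le hmem) (le_csInf ⟨_, hmem⟩ ?_)
    rintro k ⟨x', hx', rfl⟩
    exact hE.2.1 x' (by rw [hx', hb])
  refine ⟨hnu, ?_⟩
  rw [elasticity, if_neg hnu, hSup, hInf]

lemma ratio_mem_asymp (hA : ∀ u : Associates H, Irreducible u ↔ u ∈ A)
    {x y : A → ℕ} (hx0 : x ≠ 0)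
    (hext : ∀ k, 1 ≤ k → IsExt A (fun u => k * x u) (fun u => k * y u)) :
    (((tot A y : ℝ) / (tot A x : ℝ) : ℝ) : EReal) ∈ asympSet H := by
  obtain ⟨b, hb⟩ := Associates.mk_surjective (psi A x)
  have h1 : IsExt A x y := by
    have := hext 1 le_rfl
    simpa only [one_mul] using this
  have hnb := (elasticity_of_ext A hA h1 hx0 hb).1
  refine ⟨b, hnb, ?_⟩
  have hconst : ∀ n, 1 ≤ n → elasticity H (b ^ n) = (tot A y : ℝ) / (tot A x : ℝ) := by
    intro n hn
    have hbn : Associates.mk (b ^ n) = psi A (fun u => n * x u) := by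
      rw [psi_smul, Associates.mk_pow, hb]
    have hxn0 : (fun u => n * x u) ≠ 0 := by
      intro h0
      apply hx0
      funext u
      have h00 := congrFun h0 u
      simp only [Pi.zero_apply] at h00 ⊢
      rcases Nat.mul_eq_zero.mp h00 with h | h
      · omega
      · exact h
    have h2 := (elasticity_of_ext A hA (hext n hn) hxn0 hbn).2
    rw [h2, tot_smul, tot_smul]
    have hn0 : (n : ℝ) ≠ 0 := by positivity
    push_cast
    rw [mul_div_mul_left _ _ hn0]
  have : (fun n : ℕ => ((elasticity H (b ^ n) : ℝ) : EReal)) =ᶠ[Filter.atTop]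
      (fun _ : ℕ => (((tot A y : ℝ) / (tot A x : ℝ) : ℝ) : EReal)) := by
    rw [Filter.eventuallyEq_iff_exists_mem]
    exact ⟨{n | 1 ≤ n}, Filter.mem_atTop 1, fun n hn => by
      show ((elasticity H (b ^ n) : ℝ) : EReal) = _
      rw [hconst n hn]⟩
  exact (Filter.Tendsto.congr' this.symm tendsto_const_nhds)

lemma exists_ext_pair (hA : ∀ u : Associates H, Irreducible u ↔ u ∈ A)
    {a : H} {v : ℝ} (hv : elasticity H a = v) (h0 : v ≠ 0) (h1 : v ≠ 1) :
    ∃ x y : A → ℕ, IsExt A x y ∧ x ≠ 0 ∧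
      v = (tot A y : ℝ) / (tot A x : ℝ) := by
  have hirr : ∀ u : A, Irreducible (u : Associates H) := fun u => (hA u).mpr u.2
  have hnu : ¬ IsUnit a := by
    intro hu
    rw [elasticity, if_pos hu] at hv
    exact h1 hv.symm
  have hls := lengthSet_eq_fiber A hA hnu
  have hfin : (lengthSet H a).Finite := by rw [hls]; exact lengths_finite A hirr _
  have hne : (lengthSet H a).Nonempty := by
    by_contra hne
    rw [Set.not_nonempty_iff_eq_empty] at hne
    rw [elasticity, if_neg hnu, hne] at hv
    simp at hv
    exact h0 hv.symm
  have hSup := Nat.sSup_mem hne hfin.bddAbove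
  have hInf := Nat.sInf_mem hne
  rw [hls] at hSup hInf
  obtain ⟨y, hy, hyt⟩ := hSup
  obtain ⟨x, hx, hxt⟩ := hInf
  refine ⟨x, y, ⟨by rw [hx, hy], ?_, ?_⟩, ?_, ?_⟩
  · intro x' hx'
    rw [hxt]
    exact Nat.sInf_le ⟨x', by rw [hx', hx], rfl⟩
  · intro y' hy'
    rw [hyt]
    exact le_csSup (lengths_finite A hirr _).bddAbove ⟨y', by rw [hy', hx], rfl⟩
  · intro hx00
    apply hnu
    rw [← Associates.isUnit_mk, ← hx, hx00, psi_zero]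
    exact isUnit_one
  · rw [← hv, elasticity, if_neg hnu, hls, ← hyt, ← hxt]


lemma inU_sub {x y x0 y0 : A → ℕ} (h : psi A x = psi A y) (h0 : psi A x0 = psi A y0)
    (hx : x0 ≤ x) (hy : y0 ≤ y) : psi A (x - x0) = psi A (y - y0) := by
  apply assoc_cancel (a := psi A x0)
  calc psi A x0 * psi A (x - x0) = psi A x := by rw [← psi_add, add_sub_of_le A hx]
    _ = psi A y := h
    _ = psi A y0 * psi A (y - y0) := by rw [← psi_add, add_sub_of_le A hy]
    _ = psi A x0 * psi A (y - y0) := by rw [h0]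

lemma le_tot (x : A → ℕ) (u : A) : x u ≤ tot A x :=
  Finset.single_le_sum (fun _ _ => Nat.zero_le _) (Finset.mem_univ u)

lemma tot_pos {x : A → ℕ} (hx : x ≠ 0) : 1 ≤ tot A x :=
  Nat.one_le_iff_ne_zero.mpr (fun h => hx (tot_eq_zero A h))

lemma bounded_tot_finite (C : ℕ) : {x : A → ℕ | tot A x ≤ C}.Finite := by
  have hsub : {x : A → ℕ | tot A x ≤ C} ⊆ Set.pi Set.univ (fun _ : A => Set.Iic C) := by
    intro x hx u _
    exact le_trans (le_tot A x u) hx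
  exact (Set.Finite.pi (fun _ => Set.finite_Iic C)).subset hsub

end St3Aux

/-- If `H_red = H/H^×` is finitely generated and `r = inf R̄(H)`, then
`r` is the only possible limit point of `{ρ(a) : a ∈ H, 1 ≤ ρ(a) < r}`: for every
`ε > 0` the set of elasticities `≤ r - ε` is finite. -/
theorem statement3 (H : Type*) [CancelCommMonoid H]
    (hfg : Monoid.FG (Associates H)) (r : EReal) (hr : r = sInf (asympSet H))
    (ε : ℝ) (hε : 0 < ε) :
    {x : ℝ | (∃ a : H, elasticity H a = x) ∧ (x : EReal) ≤ r - (ε : EReal)}.Finite := by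
  classical
  by_contra hfin
  have hinf : Set.Infinite
      {x : ℝ | (∃ a : H, elasticity H a = x) ∧ (x : EReal) ≤ r - (ε : EReal)} := hfin
  have hrbot : r ≠ ⊥ := by
    rintro rfl
    obtain ⟨x, hx⟩ := hinf.nonempty
    have h2 := hx.2
    rw [EReal.bot_sub] at h2
    exact EReal.coe_ne_bot x (le_bot_iff.mp h2)
  obtain ⟨S, hS⟩ := hfg.fg_top
  set A : Finset (Associates H) := S.filter (fun u => Irreducible u) with hAdef
  have hA : ∀ u : Associates H, Irreducible u ↔ u ∈ A := fun u =>
    ⟨fun hu => Finset.mem_filter.mpr ⟨St3Aux.irred_mem_gen hS hu, hu⟩,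
     fun hu => (Finset.mem_filter.mp hu).2⟩
  have hinf2 : ({x : ℝ | (∃ a : H, elasticity H a = x) ∧ (x : EReal) ≤ r - (ε : EReal)}
      \ {0, 1}).Infinite :=
    hinf.diff ((Set.finite_singleton 1).insert 0)
  set e := hinf2.natEmbedding with hedef
  have hmem : ∀ n, ((e n : ℝ) ∈
      {x : ℝ | (∃ a : H, elasticity H a = x) ∧ (x : EReal) ≤ r - (ε : EReal)}) ∧
      (e n : ℝ) ≠ 0 ∧ (e n : ℝ) ≠ 1 := by
    intro n
    have h := (e n).2
    refine ⟨h.1, fun h0 => h.2 ?_, fun h1 => h.2 ?_⟩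
    · rw [h0]; exact Set.mem_insert 0 _
    · rw [h1]; exact Set.mem_insert_of_mem _ rfl
  have key : ∀ n : ℕ, ∃ xy : (A → ℕ) × (A → ℕ), St3Aux.IsExt A xy.1 xy.2 ∧ xy.1 ≠ 0 ∧
      (e n : ℝ) = (St3Aux.tot A xy.2 : ℝ) / (St3Aux.tot A xy.1 : ℝ) := by
    intro n
    obtain ⟨a, ha⟩ := (hmem n).1.1
    obtain ⟨x, y, hE, hx0, hval⟩ := St3Aux.exists_ext_pair A hA ha (hmem n).2.1 (hmem n).2.2
    exact ⟨(x, y), hE, hx0, hval⟩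
  choose P hPE hP0 hPV using key
  obtain ⟨g1, hg1s, hg1m⟩ := St3Aux.pi_mono_subseq (fun n => (P n).1)
  obtain ⟨g2, hg2s, hg2m⟩ := St3Aux.pi_mono_subseq (fun n => (P (g1 n)).2)
  set g : ℕ → ℕ := g1 ∘ g2 with hgdef
  have hgs : StrictMono g := hg1s.comp hg2s
  set Q1 : ℕ → (A → ℕ) := fun n => (P (g n)).1 with hQ1def
  set Q2 : ℕ → (A → ℕ) := fun n => (P (g n)).2 with hQ2def
  have hQ1m : ∀ i, Monotone fun n => Q1 n i := fun i a b hab => hg1m i (hg2s.monotone hab)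
  have hQ2m : ∀ i, Monotone fun n => Q2 n i := fun i a b hab => hg2m i hab
  have hwinj : Function.Injective (fun n => (e (g n) : ℝ)) := by
    intro a b hab
    have : e (g a) = e (g b) := Subtype.ext hab
    exact hgs.injective (e.injective this)
  have hwval : ∀ n, (e (g n) : ℝ) = (St3Aux.tot A (Q2 n) : ℝ) / (St3Aux.tot A (Q1 n) : ℝ) :=
    fun n => hPV (g n)
  have hwE : ∀ n, St3Aux.IsExt A (Q1 n) (Q2 n) := fun n => hPE (g n)
  have hw0 : ∀ n, Q1 n ≠ 0 := fun n => hP0 (g n)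
  obtain ⟨N1, hst1⟩ := St3Aux.pi_stab Q1 hQ1m
  obtain ⟨N2, hst2⟩ := St3Aux.pi_stab Q2 hQ2m
  set N : ℕ := max N1 N2 with hNdef
  have hst1' : ∀ i, (∀ n, N ≤ n → Q1 n i = Q1 N i) ∨ (∀ B, ∃ M, ∀ n, M ≤ n → B ≤ Q1 n i) := by
    intro i
    rcases hst1 i with h | h
    · exact Or.inl (fun n hn =>
        by rw [h n (le_trans (le_max_left _ _) hn), h N (le_max_left _ _)])
    · exact Or.inr h
  have hst2' : ∀ i, (∀ n, N ≤ n → Q2 n i = Q2 N i) ∨ (∀ B, ∃ M, ∀ n, M ≤ n → B ≤ Q2 n i) := by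
    intro i
    rcases hst2 i with h | h
    · exact Or.inl (fun n hn =>
        by rw [h n (le_trans (le_max_right _ _) hn), h N (le_max_right _ _)])
    · exact Or.inr h
  set μ1 : ℕ → (A → ℕ) := fun j => Q1 (N + j) - Q1 N with hμ1def
  set μ2 : ℕ → (A → ℕ) := fun j => Q2 (N + j) - Q2 N with hμ2def
  have hle1 : ∀ j, Q1 N ≤ Q1 (N + j) := fun j i => hQ1m i (Nat.le_add_right N j)
  have hle2 : ∀ j, Q2 N ≤ Q2 (N + j) := fun j i => hQ2m i (Nat.le_add_right N j)
  have hadd1 : ∀ j, Q1 N + μ1 j = Q1 (N + j) := fun j => St3Aux.add_sub_of_le A (hle1 j)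
  have hadd2 : ∀ j, Q2 N + μ2 j = Q2 (N + j) := fun j => St3Aux.add_sub_of_le A (hle2 j)
  have hμU : ∀ j, St3Aux.psi A (μ1 j) = St3Aux.psi A (μ2 j) := fun j =>
    St3Aux.inU_sub A (hwE (N + j)).1 (hwE N).1 (hle1 j) (hle2 j)
  have hirr : ∀ u : A, Irreducible (u : Associates H) := fun u => (hA u).mpr u.2
  have hμ1ne : ∀ j, 1 ≤ j → μ1 j ≠ 0 := by
    intro j hj h0
    have h2 : μ2 j = 0 := St3Aux.psi_eq_one A hirr (by rw [← hμU j, h0, St3Aux.psi_zero])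
    have hq1 : Q1 (N + j) = Q1 N := by rw [← hadd1 j, h0, add_zero]
    have hq2 : Q2 (N + j) = Q2 N := by rw [← hadd2 j, h2, add_zero]
    have hww : (fun n => (e (g n) : ℝ)) (N + j) = (fun n => (e (g n) : ℝ)) N := by
      simp only [hwval, hq1, hq2]
    have := hwinj hww
    omega
  have hscale : ∀ j, 1 ≤ j → ∀ k, 1 ≤ k →
      St3Aux.IsExt A (fun u => k * μ1 j u) (fun u => k * μ2 j u) := by
    intro j hj k hk
    set B : ℕ := k * (St3Aux.tot A (μ1 j) + St3Aux.tot A (μ2 j)) with hBdef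
    have hM1 : ∀ i : A, ∃ M : ℕ, (∀ n, M ≤ n → B ≤ Q1 n i) ∨ (μ1 j i = 0) := by
      intro i
      rcases hst1' i with h | h
      · have hc := h (N + j) (Nat.le_add_right N j)
        refine ⟨0, Or.inr ?_⟩
        show Q1 (N + j) i - Q1 N i = 0
        omega
      · obtain ⟨M, hM⟩ := h B
        exact ⟨M, Or.inl hM⟩
    have hM2 : ∀ i : A, ∃ M : ℕ, (∀ n, M ≤ n → B ≤ Q2 n i) ∨ (μ2 j i = 0) := by
      intro i
      rcases hst2' i with h | h
      · have hc := h (N + j) (Nat.le_add_right N j)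
        refine ⟨0, Or.inr ?_⟩
        show Q2 (N + j) i - Q2 N i = 0
        omega
      · obtain ⟨M, hM⟩ := h B
        exact ⟨M, Or.inl hM⟩
    choose M1 hM1' using hM1
    choose M2 hM2' using hM2
    set m : ℕ := max (Finset.univ.sup M1) (Finset.univ.sup M2) with hmdef
    have hxle : (fun u => k * μ1 j u) ≤ Q1 m := by
      intro i
      rcases hM1' i with h | h
      · refine le_trans ?_ (h m (le_trans (Finset.le_sup (Finset.mem_univ i)) (le_max_left _ _)))
        calc k * μ1 j i ≤ k * St3Aux.tot A (μ1 j) :=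
              Nat.mul_le_mul_left k (St3Aux.le_tot A (μ1 j) i)
          _ ≤ B := Nat.mul_le_mul_left k (Nat.le_add_right _ _)
      · show k * μ1 j i ≤ Q1 m i
        rw [h, Nat.mul_zero]
        exact Nat.zero_le _
    have hyle : (fun u => k * μ2 j u) ≤ Q2 m := by
      intro i
      rcases hM2' i with h | h
      · refine le_trans ?_ (h m (le_trans (Finset.le_sup (Finset.mem_univ i)) (le_max_right _ _)))
        calc k * μ2 j i ≤ k * St3Aux.tot A (μ2 j) :=
              Nat.mul_le_mul_left k (St3Aux.le_tot A (μ2 j) i)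
          _ ≤ B := Nat.mul_le_mul_left k (Nat.le_add_left _ _)
      · show k * μ2 j i ≤ Q2 m i
        rw [h, Nat.mul_zero]
        exact Nat.zero_le _
    exact St3Aux.ext_mono A (hwE m)
      (by rw [St3Aux.psi_smul, St3Aux.psi_smul, hμU j]) hxle hyle
  have hrle : ∀ j, 1 ≤ j →
      r ≤ (((St3Aux.tot A (μ2 j) : ℝ) / (St3Aux.tot A (μ1 j) : ℝ) : ℝ) : EReal) := by
    intro j hj
    have hmem' := St3Aux.ratio_mem_asymp A hA (hμ1ne j hj) (fun k hk => hscale j hj k hk)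
    rw [hr]
    exact sInf_le hmem'
  have hrtop : r ≠ ⊤ := by
    have := hrle 1 le_rfl
    exact (lt_of_le_of_lt this (EReal.coe_lt_top _)).ne
  set rr : ℝ := r.toReal with hrrdef
  have hrr : (rr : EReal) = r := EReal.coe_toReal hrtop hrbot
  have hrleR : ∀ j, 1 ≤ j →
      rr * (St3Aux.tot A (μ1 j) : ℝ) ≤ (St3Aux.tot A (μ2 j) : ℝ) := by
    intro j hj
    have h := hrle j hj
    rw [← hrr] at h
    have h2 := EReal.coe_le_coe_iff.mp h
    have hpos : (0:ℝ) < (St3Aux.tot A (μ1 j) : ℝ) := by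
      exact_mod_cast St3Aux.tot_pos A (hμ1ne j hj)
    exact (le_div_iff₀ hpos).mp h2
  have hwle : ∀ n, (e (g n) : ℝ) ≤ rr - ε := by
    intro n
    have h := (hmem (g n)).1.2
    have h' : ((e (g n) : ℝ) : EReal) ≤ ((rr - ε : ℝ) : EReal) := by
      rw [EReal.coe_sub, hrr]
      exact h
    exact EReal.coe_le_coe_iff.mp h' 
  have hkey : ∀ j, 1 ≤ j →
      ε * (St3Aux.tot A (μ1 j) : ℝ) ≤ (rr - ε) * (St3Aux.tot A (Q1 N) : ℝ) := by
    intro j hj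
    have hw := hwle (N + j)
    rw [hwval (N + j)] at hw
    have e1 : St3Aux.tot A (Q1 (N + j)) = St3Aux.tot A (Q1 N) + St3Aux.tot A (μ1 j) := by
      rw [← hadd1 j, St3Aux.tot_add]
    have e2 : St3Aux.tot A (Q2 (N + j)) = St3Aux.tot A (Q2 N) + St3Aux.tot A (μ2 j) := by
      rw [← hadd2 j, St3Aux.tot_add]
    rw [e1, e2] at hw
    have ht1pos : (0:ℝ) < (St3Aux.tot A (μ1 j) : ℝ) := by
      exact_mod_cast St3Aux.tot_pos A (hμ1ne j hj)
    have hT1pos : (0:ℝ) < (St3Aux.tot A (Q1 N) : ℝ) := by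
      exact_mod_cast St3Aux.tot_pos A (hw0 N)
    have hT2nonneg : (0:ℝ) ≤ (St3Aux.tot A (Q2 N) : ℝ) := by positivity
    have hdenpos : (0:ℝ) < (St3Aux.tot A (Q1 N) : ℝ) + (St3Aux.tot A (μ1 j) : ℝ) := by
      linarith
    rw [Nat.cast_add, Nat.cast_add] at hw
    have hineq : (St3Aux.tot A (Q2 N) : ℝ) + (St3Aux.tot A (μ2 j) : ℝ) ≤
        (rr - ε) * ((St3Aux.tot A (Q1 N) : ℝ) + (St3Aux.tot A (μ1 j) : ℝ)) :=
      (div_le_iff₀ hdenpos).mp hw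
    have hratio := hrleR j hj
    nlinarith [hineq, hratio, hT2nonneg]
  have hunb : ∀ B : ℕ, ∃ j, 1 ≤ j ∧ B ≤ St3Aux.tot A (μ1 j) := by
    intro B
    by_contra hcon
    push_neg at hcon
    have hfin2 : {x : A → ℕ | St3Aux.tot A x ≤ St3Aux.tot A (Q1 N) + B}.Finite :=
      St3Aux.bounded_tot_finite A _
    haveI := hfin2.to_subtype
    have hmemf : ∀ j : ℕ, Q1 (N + (1 + j)) ∈
        {x : A → ℕ | St3Aux.tot A x ≤ St3Aux.tot A (Q1 N) + B} := by
      intro j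
      have hlt := hcon (1 + j) (by omega)
      have e1 : St3Aux.tot A (Q1 (N + (1 + j)))
          = St3Aux.tot A (Q1 N) + St3Aux.tot A (μ1 (1 + j)) := by
        rw [← hadd1 (1 + j), St3Aux.tot_add]
      show St3Aux.tot A (Q1 (N + (1 + j))) ≤ St3Aux.tot A (Q1 N) + B
      omega
    obtain ⟨a, b, hab, hfab⟩ := Finite.exists_ne_map_eq_of_infinite
      (fun j : ℕ => (⟨Q1 (N + (1 + j)), hmemf j⟩ :
        {x : A → ℕ // x ∈ {x : A → ℕ | St3Aux.tot A x ≤ St3Aux.tot A (Q1 N) + B}}))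
    have hq : Q1 (N + (1 + a)) = Q1 (N + (1 + b)) := congrArg Subtype.val hfab
    have htot2 : St3Aux.tot A (Q2 (N + (1 + a))) = St3Aux.tot A (Q2 (N + (1 + b))) := by
      apply le_antisymm
      · exact (hwE (N + (1 + b))).2.2 _ (by rw [(hwE (N + (1 + a))).1.symm, hq])
      · exact (hwE (N + (1 + a))).2.2 _ (by rw [(hwE (N + (1 + b))).1.symm, hq])
    have hww : (fun n => (e (g n) : ℝ)) (N + (1 + a)) = (fun n => (e (g n) : ℝ)) (N + (1 + b)) := by
      simp only [hwval, hq, htot2]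
    have := hwinj hww
    omega
  obtain ⟨B, hB⟩ := exists_nat_gt (((rr - ε) * (St3Aux.tot A (Q1 N) : ℝ)) / ε)
  obtain ⟨j, hj1, hjB⟩ := hunb B
  have h1 := hkey j hj1
  have hBle : (B : ℝ) ≤ (St3Aux.tot A (μ1 j) : ℝ) := by exact_mod_cast hjB
  have hlt : ((rr - ε) * (St3Aux.tot A (Q1 N) : ℝ)) / ε < (St3Aux.tot A (μ1 j) : ℝ) :=
    lt_of_lt_of_le hB hBle
  rw [div_lt_iff₀ hε] at hlt
  linarith
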